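/- Let (X,T) be a topological space and d a metric on X whose topology T_d is finer than T, and suppose property P(d,T) holds. Then there is a network for the metric topology T_d which is σ-isolated for the topology T; equivalently, for each ε > 0 there is a covering of X which is σ-isolated for T and consists of sets of d-diameter at most ε. -/

import Mathlib

open Filter Topology

/-- `d` is a metric on `K` (as a bare distance function). -/
structure IsMetricOn (K : Type*) (d : K → K → ℝ) : Prop where
  self_eq_zero : ∀ x, d x x = 0
  eq_of_dist_eq_zero : ∀ x y, d x y = 0 → x = y
  symm : ∀ x y, d x y = d y x
  triangle : ∀ x y z, d x z ≤ d x y + d y z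

/-- The topology `T_d` induced by the distance function `d`: generated by open balls. -/
def metricTopology {K : Type*} (d : K → K → ℝ) : TopologicalSpace K :=
  TopologicalSpace.generateFrom {S | ∃ (x : K) (ε : ℝ), 0 < ε ∧ S = {y | d x y < ε}}

/-- Property `P(d,T)`: there is a sequence `(B_n)` of subsets of `K` such that the
topology generated by `T ∪ {B_n : n ∈ ℕ}` is finer than the metric topology `T_d`. -/
def PropertyP {K : Type*} (T : TopologicalSpace K) (d : K → K → ℝ) : Prop :=
  ∃ B : ℕ → Set K,
    TopologicalSpace.generateFrom ({U | T.IsOpen U} ∪ Set.range B) ≤ metricTopology d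

/-- The LUR hypothesis and conclusion at a point `x`, for a gauge `N`. -/
def LURAt {Z : Type*} [AddCommGroup Z] [Module ℝ Z] (N : Z → ℝ) (x : Z) : Prop :=
  ∀ xr : ℕ → Z,
    Tendsto (fun r => (1/2) * N x ^ 2 + (1/2) * N (xr r) ^ 2
        - N ((1/2 : ℝ) • (x + xr r)) ^ 2) atTop (nhds 0) →
    Tendsto (fun r => N (x - xr r)) atTop (nhds 0)

/-- `N` is a norm on the real vector space `Z`. -/
def IsNorm {Z : Type*} [AddCommGroup Z] [Module ℝ Z] (N : Z → ℝ) : Prop :=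
  (∀ z, 0 ≤ N z) ∧ (∀ z, N z = 0 → z = 0) ∧
    (∀ (c : ℝ) (z : Z), N (c • z) = |c| * N z) ∧
    ∀ z w, N (z + w) ≤ N z + N w

/-- A family of subsets is isolated (for the ambient topology) if each member is
disjoint from the closure of the union of the other members. -/
def IsIsolatedFamily {K : Type*} [TopologicalSpace K] (ℐ : Set (Set K)) : Prop :=
  ∀ N ∈ ℐ, N ∩ closure (⋃₀ (ℐ \ {N})) = ∅

/-- If `P(d,T)` holds then there is a network for the metric topology `T_d` which is
`σ`-isolated for `T`; equivalently, for each `ε > 0` there is a covering of `X` which is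
`σ`-isolated for `T` and consists of sets of `d`-diameter at most `ε`. -/
private lemma exists_ball_subset' {X : Type*} (d : X → X → ℝ) (hmet : IsMetricOn X d)
    {U : Set X} (hU : (metricTopology d).IsOpen U) :
    ∀ x ∈ U, ∃ ρ : ℝ, 0 < ρ ∧ {y | d x y < ρ} ⊆ U := by
  have hU' : TopologicalSpace.GenerateOpen
      {S | ∃ (z : X) (e : ℝ), 0 < e ∧ S = {y | d z y < e}} U := hU
  clear hU
  induction hU' with
  | basic S hS =>
    obtain ⟨z, e, he, rfl⟩ := hS
    intro x hx
    refine ⟨e - d z x, by simpa using hx, fun y hy => ?_⟩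
    have h1 := hmet.triangle z x y
    simp only [Set.mem_setOf_eq] at hy ⊢
    linarith
  | univ => exact fun x _ => ⟨1, one_pos, fun _ _ => trivial⟩
  | inter S₁ S₂ h1 h2 ih1 ih2 =>
    intro x hx
    obtain ⟨ρ₁, hρ₁, hs₁⟩ := ih1 x hx.1
    obtain ⟨ρ₂, hρ₂, hs₂⟩ := ih2 x hx.2
    refine ⟨min ρ₁ ρ₂, lt_min hρ₁ hρ₂, fun y hy => ?_⟩
    have hy' : d x y < min ρ₁ ρ₂ := hy
    exact ⟨hs₁ (show d x y < ρ₁ from lt_of_lt_of_le hy' (min_le_left _ _)),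
      hs₂ (show d x y < ρ₂ from lt_of_lt_of_le hy' (min_le_right _ _))⟩
  | sUnion 𝒮 h ih =>
    intro x hx
    obtain ⟨S, hS, hxS⟩ := hx
    obtain ⟨ρ, hρ, hsub⟩ := ih S hS x hxS
    exact ⟨ρ, hρ, hsub.trans (Set.subset_sUnion_of_mem hS)⟩

private lemma exists_basic' {X : Type*} [TopologicalSpace X] (B : ℕ → Set X) {W : Set X}
    (hW : TopologicalSpace.GenerateOpen ({U : Set X | IsOpen U} ∪ Set.range B) W) :
    ∀ x ∈ W, ∃ (U : Set X) (F : Finset ℕ), IsOpen U ∧ x ∈ U ∧ (∀ i ∈ F, x ∈ B i) ∧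
      U ∩ (⋂ i ∈ F, B i) ⊆ W := by
  induction hW with
  | basic S hS =>
    intro x hx
    rcases hS with hS | ⟨i, rfl⟩
    · exact ⟨S, ∅, hS, hx, by simp, by simp⟩
    · exact ⟨Set.univ, {i}, isOpen_univ, trivial, by simpa using hx, by simp⟩
  | univ => exact fun x _ => ⟨Set.univ, ∅, isOpen_univ, trivial, by simp, by simp⟩
  | inter S₁ S₂ h1 h2 ih1 ih2 =>
    intro x hx
    obtain ⟨U₁, F₁, hU₁, hxU₁, hxB₁, hsub₁⟩ := ih1 x hx.1
    obtain ⟨U₂, F₂, hU₂, hxU₂, hxB₂, hsub₂⟩ := ih2 x hx.2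
    refine ⟨U₁ ∩ U₂, F₁ ∪ F₂, hU₁.inter hU₂, ⟨hxU₁, hxU₂⟩, ?_, ?_⟩
    · intro i hi
      rcases Finset.mem_union.mp hi with h | h
      exacts [hxB₁ i h, hxB₂ i h]
    · rintro z ⟨⟨hz1, hz2⟩, hzB⟩
      have hzB' := Set.mem_iInter₂.mp hzB
      exact ⟨hsub₁ ⟨hz1, Set.mem_iInter₂.mpr fun i hi => hzB' i (Finset.mem_union_left _ hi)⟩,
        hsub₂ ⟨hz2, Set.mem_iInter₂.mpr fun i hi => hzB' i (Finset.mem_union_right _ hi)⟩⟩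
  | sUnion 𝒮 h ih =>
    intro x hx
    obtain ⟨S, hS, hxS⟩ := hx
    obtain ⟨U, F, h1, h2, h3, h4⟩ := ih S hS x hxS
    exact ⟨U, F, h1, h2, h3, h4.trans (Set.subset_sUnion_of_mem hS)⟩

private lemma main_cover {X : Type*} [T : TopologicalSpace X] (d : X → X → ℝ)
    (hmet : IsMetricOn X d) (hP : PropertyP T d) {ε : ℝ} (hε : 0 < ε) :
    ∃ S : ℕ → Set (Set X), (∀ n : ℕ, IsIsolatedFamily (S n)) ∧
      (⋃₀ (⋃ n : ℕ, S n) = Set.univ) ∧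
      ∀ N ∈ ⋃ n : ℕ, S n, ∀ t ∈ N, ∀ u ∈ N, d t u ≤ ε := by
  classical
  obtain ⟨B, hB⟩ := hP
  set δ := ε / 16 with hδdef
  have hδ : 0 < δ := by positivity
  have hnn : ∀ x y, 0 ≤ d x y := by
    intro x y
    have h1 := hmet.triangle x y x
    have h2 := hmet.symm y x
    have h3 := hmet.self_eq_zero x
    linarith
  have hwf : WellFounded (WellOrderingRel : X → X → Prop) := IsWellFounded.wf
  have hne : ∀ y : X, {z : X | d z y < δ}.Nonempty :=
    fun y => ⟨y, by simp [hmet.self_eq_zero y, hδ]⟩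
  set c : X → X := fun y => hwf.min {z | d z y < δ} (hne y) with hcdef
  have hc1 : ∀ y, d (c y) y < δ := fun y => hwf.min_mem _ (hne y)
  have hc2 : ∀ y z, d z y < δ → ¬ WellOrderingRel z (c y) :=
    fun y z hz => hwf.not_lt_min _ hz
  have hex : ∀ y : X, ∃ n : ℕ, 3 * (1/2 : ℝ)^n ≤ δ - d (c y) y := by
    intro y
    obtain ⟨n, hn⟩ := exists_pow_lt_of_lt_one
      (show (0:ℝ) < (δ - d (c y) y)/3 by linarith [hc1 y]) (by norm_num : (1/2:ℝ) < 1)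
    exact ⟨n, by linarith⟩
  set m : X → ℕ := fun y => Nat.find (hex y) with hmdef
  have hm1 : ∀ y, 3 * (1/2:ℝ)^(m y) ≤ δ - d (c y) y := fun y => Nat.find_spec (hex y)
  have hpow : ∀ n : ℕ, (0:ℝ) < (1/2)^n := fun n => by positivity
  set V : ℕ → X → Set X := fun n p =>
    ⋃₀ {S | ∃ y : X, c y = p ∧ m y = n ∧ S = {w | d y w < (1/2)^n}} with hVdef
  have hVopen : ∀ n p, (metricTopology d).IsOpen (V n p) := by
    intro n p
    refine TopologicalSpace.GenerateOpen.sUnion _ (fun S hS => ?_)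
    obtain ⟨y, -, -, rfl⟩ := hS
    exact TopologicalSpace.GenerateOpen.basic _ ⟨y, (1/2)^n, hpow n, rfl⟩
  have hVmem : ∀ y : X, y ∈ V (m y) (c y) := by
    intro y
    exact ⟨{w | d y w < (1/2)^(m y)}, ⟨y, rfl, rfl, rfl⟩,
      by simp [hmet.self_eq_zero y, hpow (m y)]⟩
  -- small "radius" bound
  have hrad : ∀ y : X, (1/2:ℝ)^(m y) ≤ δ := by
    intro y
    have := hm1 y
    have := hnn (c y) y
    have := hpow (m y)
    linarith
  have hVdisj : ∀ n (p q : X), p ≠ q → ∀ w, w ∈ V n p → w ∈ V n q → False := by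
    intro n p q hpq w hwp hwq
    have hpn : (0:ℝ) < (1/2)^n := hpow n
    obtain ⟨Sy, ⟨y, hyc, hym, rfl⟩, hwy⟩ := hwp
    obtain ⟨Sz, ⟨z, hzc, hzm, rfl⟩, hwz⟩ := hwq
    have hwy : d y w < (1/2)^n := hwy
    have hwz : d z w < (1/2)^n := hwz
    have hy1 : d (c y) y ≤ δ - 3 * (1/2)^n := by have := hm1 y; rw [hym] at this; linarith
    have hz1 : d (c z) z ≤ δ - 3 * (1/2)^n := by have := hm1 z; rw [hzm] at this; linarith
    rcases trichotomous_of WellOrderingRel p q with h | h | h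
    · -- p < q, q = c z minimal for z, but d p z < δ
      refine hc2 z p ?_ (by rw [hzc]; exact h)
      have t1 : d p z ≤ d p y + d y z := hmet.triangle p y z
      have t2 : d y z ≤ d y w + d w z := hmet.triangle y w z
      have t3 : d w z = d z w := hmet.symm w z
      have t4 : d p y = d (c y) y := by rw [hyc]
      linarith
    · exact hpq h
    · -- q < p, p = c y minimal for y, but d q y < δ
      refine hc2 y q ?_ (by rw [hyc]; exact h)
      have t1 : d q y ≤ d q z + d z y := hmet.triangle q z y
      have t2 : d z y ≤ d z w + d w y := hmet.triangle z w y
      have t3 : d w y = d y w := hmet.symm w y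
      have t4 : d q z = d (c z) z := by rw [hzc]
      linarith
  have hVdiam : ∀ n p t u, t ∈ V n p → u ∈ V n p → d t u ≤ ε := by
    intro n p t u ht hu
    obtain ⟨Sy, ⟨y, hyc, hym, rfl⟩, hty⟩ := ht
    obtain ⟨Sz, ⟨z, hzc, hzm, rfl⟩, huz⟩ := hu
    have hty : d y t < (1/2)^n := hty
    have huz : d z u < (1/2)^n := huz
    have hry : (1/2:ℝ)^n ≤ δ := by rw [← hym]; exact hrad y
    have t1 : d t u ≤ d t y + d y u := hmet.triangle t y u
    have t2 : d y u ≤ d y p + d p u := hmet.triangle y p u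
    have t3 : d p u ≤ d p z + d z u := hmet.triangle p z u
    have s1 : d t y = d y t := hmet.symm t y
    have s2 : d y p = d p y := hmet.symm y p
    have e1 : d p y = d (c y) y := by rw [hyc]
    have e2 : d p z = d (c z) z := by rw [hzc]
    have b1 : d (c y) y < δ := hc1 y
    have b2 : d (c z) z < δ := hc1 z
    have : δ = ε / 16 := hδdef
    linarith
  set VF : ℕ → X → Finset ℕ → Set X := fun n p F =>
    {x | x ∈ V n p ∧ ∃ U : Set X, IsOpen U ∧ x ∈ U ∧ (∀ i ∈ F, x ∈ B i) ∧
      U ∩ (⋂ i ∈ F, B i) ⊆ V n p} with hVFdef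
  set S' : ℕ × Finset ℕ → Set (Set X) := fun nF => {A | ∃ p : X, A = VF nF.1 p nF.2} with hS'def
  have hiso : ∀ nF, IsIsolatedFamily (S' nF) := by
    rintro ⟨n, F⟩ N hN
    obtain ⟨p, rfl⟩ := hN
    rw [Set.eq_empty_iff_forall_notMem]
    rintro x ⟨⟨hxV, U, hUo, hxU, hxB, hUsub⟩, hxcl⟩
    obtain ⟨y, hyU, hyUn⟩ := mem_closure_iff.mp hxcl U hUo hxU
    obtain ⟨A, ⟨hAS, hAne⟩, hyA⟩ := hyUn
    obtain ⟨q, rfl⟩ := hAS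
    obtain ⟨hyV, U', hU'o, hyU', hyB, hU'sub⟩ := hyA
    have hqp : q ≠ p := by
      rintro rfl
      exact hAne rfl
    have hyVp : y ∈ V n p := hUsub ⟨hyU, Set.mem_iInter₂.mpr hyB⟩
    exact hVdisj n p q hqp.symm y hyVp hyV
  have hcov : ∀ x : X, ∃ (nF : ℕ × Finset ℕ) (p : X), x ∈ VF nF.1 p nF.2 := by
    intro x
    have hxV : x ∈ V (m x) (c x) := hVmem x
    have hopen : TopologicalSpace.GenerateOpen ({U : Set X | IsOpen U} ∪ Set.range B)
        (V (m x) (c x)) := by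
      have h1 := hVopen (m x) (c x)
      exact TopologicalSpace.le_def.mp hB _ h1
    obtain ⟨U, F, hUo, hxU, hxB, hsub⟩ := exists_basic' B hopen x hxV
    exact ⟨(m x, F), c x, hxV, U, hUo, hxU, hxB, hsub⟩
  obtain ⟨f, hf⟩ := exists_surjective_nat (ℕ × Finset ℕ)
  refine ⟨fun k => S' (f k), fun k => hiso (f k), ?_, ?_⟩
  · rw [Set.eq_univ_iff_forall]
    intro x
    obtain ⟨nF, p, hx⟩ := hcov x
    obtain ⟨k, rfl⟩ := hf nF
    exact ⟨VF (f k).1 p (f k).2, Set.mem_iUnion.mpr ⟨k, ⟨p, rfl⟩⟩, hx⟩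
  · intro N hN t ht u hu
    obtain ⟨k, hk⟩ := Set.mem_iUnion.mp hN
    obtain ⟨p, rfl⟩ := hk
    exact hVdiam (f k).1 p t u ht.1 hu.1

theorem sigma_isolated_network_of_propertyP {X : Type*} [TopologicalSpace X]
    (d : X → X → ℝ) (hmet : IsMetricOn X d)
    (hfiner : metricTopology d ≤ ‹TopologicalSpace X›)
    (hP : PropertyP ‹TopologicalSpace X› d) :
    (∃ S : ℕ → Set (Set X), (∀ n : ℕ, IsIsolatedFamily (S n)) ∧
      ∀ (x : X) (U : Set X), (metricTopology d).IsOpen U → x ∈ U →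
        ∃ n : ℕ, ∃ N ∈ S n, x ∈ N ∧ N ⊆ U) ∧
    ∀ ε : ℝ, 0 < ε → ∃ S : ℕ → Set (Set X), (∀ n : ℕ, IsIsolatedFamily (S n)) ∧
      (⋃₀ (⋃ n : ℕ, S n) = Set.univ) ∧
      ∀ N ∈ ⋃ n : ℕ, S n, ∀ t ∈ N, ∀ u ∈ N, d t u ≤ ε := by
  classical
  constructor
  · choose Sm hiso hcov hmesh using fun k : ℕ =>
      main_cover d hmet hP (show (0:ℝ) < (1/2)^k by positivity)
    obtain ⟨g, hg⟩ := exists_surjective_nat (ℕ × ℕ)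
    refine ⟨fun k => Sm (g k).1 (g k).2, fun k => hiso _ _, ?_⟩
    intro x U hU hxU
    obtain ⟨ρ, hρ, hball⟩ := exists_ball_subset' d hmet hU x hxU
    obtain ⟨mι, hmι⟩ := exists_pow_lt_of_lt_one hρ (by norm_num : (1/2:ℝ) < 1)
    have hx : x ∈ ⋃₀ (⋃ n : ℕ, Sm mι n) := by rw [hcov mι]; trivial
    obtain ⟨N, hNmem, hxN⟩ := hx
    obtain ⟨j, hj⟩ := Set.mem_iUnion.mp hNmem
    obtain ⟨k, hk⟩ := hg (mι, j)
    refine ⟨k, N, by show N ∈ Sm (g k).1 (g k).2; rw [hk]; exact hj, hxN, fun u hu => hball ?_⟩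
    have hle := hmesh mι N (Set.mem_iUnion.mpr ⟨j, hj⟩) x hxN u hu
    exact lt_of_le_of_lt hle hmι
  · intro ε hε
    exact main_cover d hmet hP hε
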